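/- Fix λ = Λ_{i₁} + ⋯ + Λ_{i_r} with i₁ ≥ i₂ ≥ ⋯ ≥ i_r, and let (μ^{(1)}, …, μ^{(r)}) be a Kleshchev multipartition, i.e., μ^{(t)}_{i_t − i_{t+1} + x} ≤ μ^{(t+1)}_x for all x ≥ 1 and 1 ≤ t ≤ r−1. If E_j of this colored multipartition (remove the j-box corresponding to the leftmost uncanceled − in the signature built from removable/addable j-boxes of the μ^{(k)}) is nonzero, then the resulting colored multipartition is again a Kleshchev multipartition. -/

import Mathlib

/-- A partition: a weakly decreasing list of positive integers. -/
def IsPartition (μ : List ℕ) : Prop :=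
  μ.Pairwise (· ≥ ·) ∧ ∀ x ∈ μ, 0 < x

/-- Remove one box from row `m` (0-indexed), deleting the row if it becomes empty. -/
def removeBox (μ : List ℕ) (m : ℕ) : List ℕ :=
  (μ.set m (μ.getD m 0 - 1)).filter (fun x => decide (0 < x))

/-- The box at the end of row `m` (0-indexed) of `μ` colored by `i` is a removable `j`-box:
it is filled with `j` (the `(x,y)` box is filled with `i + x - y`, rows and columns 1-indexed),
and removing it yields the diagram of a partition. -/
def RemovableJBox (μ : List ℕ) (i j : ℤ) (m : ℕ) : Prop :=
  m < μ.length ∧ i + (μ.getD m 0 : ℤ) - (m + 1 : ℕ) = j ∧ IsPartition (removeBox μ m)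

/-- Add a box at the end of row `m` (0-indexed); `m = μ.length` starts a new row. -/
def addBox (μ : List ℕ) (m : ℕ) : List ℕ :=
  if m < μ.length then μ.set m (μ.getD m 0 + 1) else μ ++ [1]

/-- The position at the end of row `m` is an addable `j`-box: the added box would be filled
with `j` and adding it yields the diagram of a partition. -/
def AddableJBox (μ : List ℕ) (i j : ℤ) (m : ℕ) : Prop :=
  m ≤ μ.length ∧ i + ((μ.getD m 0 : ℤ) + 1) - (m + 1 : ℕ) = j ∧ IsPartition (addBox μ m)

instance (μ : List ℕ) (i j : ℤ) (m : ℕ) : Decidable (RemovableJBox μ i j m) := by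
  unfold RemovableJBox IsPartition; infer_instance

instance (μ : List ℕ) (i j : ℤ) (m : ℕ) : Decidable (AddableJBox μ i j m) := by
  unfold AddableJBox IsPartition; infer_instance

/-- The crystal operator `E_j` on a single partition colored by `i`: remove the (unique)
removable `j`-box if one exists, otherwise return `none` (the symbol `0`). -/
def EjPart (i j : ℤ) (μ : List ℕ) : Option (List ℕ) :=
  match (List.range μ.length).find? (fun m => decide (RemovableJBox μ i j m)) with
  | none => none
  | some m => some (removeBox μ m)
/-- Symbols of a signature word. -/
inductive PMSym | plus | minus | blank
deriving DecidableEq, Repr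

/-- Signature reduction keeping positions: blanks are dropped and adjacent `-+` pairs cancel;
the result lists the uncanceled symbols together with their positions and has the
form `+ ⋯ + - ⋯ -`. -/
def redIdx : List (ℕ × PMSym) → List (ℕ × PMSym)
  | [] => []
  | p :: xs =>
    let r := redIdx xs
    match p.2 with
    | PMSym.blank => r
    | PMSym.plus => p :: r
    | PMSym.minus =>
      match r with
      | q :: r' => if q.2 = PMSym.plus then r' else p :: r
      | [] => [p]

/-- One step of signature reduction: `(p, m) = (#uncanceled +, #uncanceled -)` so far. -/
def sigStep : ℕ × ℕ → PMSym → ℕ × ℕ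
  | (p, m), PMSym.plus => if 0 < m then (p, m - 1) else (p + 1, m)
  | (p, m), PMSym.minus => (p, m + 1)
  | (p, m), PMSym.blank => (p, m)

/-- `sig w = (φ, ε)`: the numbers of uncanceled `+` and `-` symbols of `w`. -/
def sig (w : List PMSym) : ℕ × ℕ := w.foldl sigStep (0, 0)

/-- The Kleshchev condition for a multipartition `μs` colored by
`λ = Λ_{i₁} + ⋯ + Λ_{i_r}` with `i₁ ≥ ⋯ ≥ i_r` (components and colors listed in that
order): `μ^{(t)}_{i_t - i_{t+1} + x} ≤ μ^{(t+1)}_x` for all `x ≥ 1`, `1 ≤ t ≤ r - 1`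
(here rows are 0-indexed, so row `x` below corresponds to row `x + 1`). -/
def Kleshchev (is : List ℤ) (μs : List (List ℕ)) : Prop :=
  ∀ t : ℕ, t + 1 < μs.length → ∀ x : ℕ,
    (μs.getD t []).getD ((is.getD t 0 - is.getD (t + 1) 0).toNat + x) 0
      ≤ (μs.getD (t + 1) []).getD x 0

/-- The signature symbol of a component `(μ, i)` for the letter `j`: `-` if it has a
removable `j`-box, `+` if it has an addable `j`-box, blank otherwise. -/
def symOf (j : ℤ) (p : List ℕ × ℤ) : PMSym :=
  if (List.range p.1.length).any (fun m => decide (RemovableJBox p.1 p.2 j m)) then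
    PMSym.minus
  else if (List.range (p.1.length + 1)).any (fun m => decide (AddableJBox p.1 p.2 j m)) then
    PMSym.plus
  else PMSym.blank

/-- `E_j` on a colored multipartition: remove the removable `j`-box from the component
carrying the leftmost uncanceled `-` of the signature word, or return `none` if no
uncanceled `-` exists. -/
def EjMP (j : ℤ) (is : List ℤ) (μs : List (List ℕ)) : Option (List (List ℕ)) :=
  match (redIdx (((μs.zip is).map (symOf j)).zipIdx.map Prod.swap)).find? (fun p => p.2 == PMSym.minus) with
  | none => none
  | some p =>
    match EjPart (is.getD p.1 0) j (μs.getD p.1 []) with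
    | none => none
    | some ν => some (μs.set p.1 ν)


lemma redIdx_cons_blank (n : ℕ) (xs : List (ℕ × PMSym)) :
    redIdx ((n, PMSym.blank) :: xs) = redIdx xs := rfl

lemma redIdx_cons_plus (n : ℕ) (xs : List (ℕ × PMSym)) :
    redIdx ((n, PMSym.plus) :: xs) = (n, PMSym.plus) :: redIdx xs := rfl

lemma redIdx_cons_minus_nil (n : ℕ) (xs : List (ℕ × PMSym)) (h : redIdx xs = []) :
    redIdx ((n, PMSym.minus) :: xs) = [(n, PMSym.minus)] := by
  simp [redIdx, h]

lemma redIdx_cons_minus_plus (n : ℕ) (xs : List (ℕ × PMSym)) (q : ℕ × PMSym)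
    (r' : List (ℕ × PMSym)) (h : redIdx xs = q :: r') (hq : q.2 = PMSym.plus) :
    redIdx ((n, PMSym.minus) :: xs) = r' := by
  simp [redIdx, h, hq]

lemma redIdx_cons_minus_other (n : ℕ) (xs : List (ℕ × PMSym)) (q : ℕ × PMSym)
    (r' : List (ℕ × PMSym)) (h : redIdx xs = q :: r') (hq : q.2 ≠ PMSym.plus) :
    redIdx ((n, PMSym.minus) :: xs) = (n, PMSym.minus) :: q :: r' := by
  simp [redIdx, h, hq]

lemma redIdx_sublist (l : List (ℕ × PMSym)) : List.Sublist (redIdx l) l := by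
  induction l with
  | nil => simp [redIdx]
  | cons p xs ih =>
    obtain ⟨n, s⟩ := p
    cases s with
    | blank => rw [redIdx_cons_blank]; exact ih.cons _
    | plus => rw [redIdx_cons_plus]; exact ih.cons₂ _
    | minus =>
      cases hr : redIdx xs with
      | nil => rw [redIdx_cons_minus_nil _ _ hr]; simp
      | cons q r' =>
        by_cases hq : q.2 = PMSym.plus
        · rw [redIdx_cons_minus_plus _ _ _ _ hr hq]
          rw [hr] at ih
          exact ((List.sublist_cons_self q r').trans ih).cons _
        · rw [redIdx_cons_minus_other _ _ _ _ hr hq]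
          rw [hr] at ih
          exact ih.cons₂ _

lemma minus_mem_redIdx_cons (p : ℕ × PMSym) (xs : List (ℕ × PMSym)) (k : ℕ)
    (h : (k, PMSym.minus) ∈ redIdx xs) : (k, PMSym.minus) ∈ redIdx (p :: xs) := by
  obtain ⟨n, s⟩ := p
  cases s with
  | blank => rwa [redIdx_cons_blank]
  | plus => rw [redIdx_cons_plus]; exact List.mem_cons_of_mem _ h
  | minus =>
    cases hr : redIdx xs with
    | nil => rw [hr] at h; simp at h
    | cons q r' =>
      rw [hr] at h
      by_cases hq : q.2 = PMSym.plus
      · rw [redIdx_cons_minus_plus _ _ _ _ hr hq]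
        rcases List.mem_cons.1 h with rfl | h
        · simp at hq
        · exact h
      · rw [redIdx_cons_minus_other _ _ _ _ hr hq]
        exact List.mem_cons_of_mem _ h

/-- If `(k+1, -)` survives reduction and position `k` is a minus, then some minus at
position `≤ k` survives reduction. -/
lemma lemC (l : List (ℕ × PMSym)) (hl : l.Pairwise (fun a b => a.1 < b.1)) (k : ℕ)
    (hk : (k + 1, PMSym.minus) ∈ redIdx l) (hk' : (k, PMSym.minus) ∈ l) :
    ∃ k'' ≤ k, (k'', PMSym.minus) ∈ redIdx l := by
  induction l with
  | nil => simp at hk'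
  | cons p xs ih =>
    have hpx : ∀ b ∈ xs, p.1 < b.1 := fun b hb => (List.pairwise_cons.1 hl).1 b hb
    have hxs : xs.Pairwise (fun a b => a.1 < b.1) := (List.pairwise_cons.1 hl).2
    obtain ⟨n, s⟩ := p
    cases s with
    | blank =>
      rw [redIdx_cons_blank] at hk ⊢
      rcases List.mem_cons.1 hk' with h | h
      · simp at h
      · exact ih hxs hk h
    | plus =>
      rw [redIdx_cons_plus] at hk ⊢
      rcases List.mem_cons.1 hk' with h | h
      · simp at h
      · rcases List.mem_cons.1 hk with h2 | h2
        · simp at h2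
        · obtain ⟨k'', hle, hm⟩ := ih hxs h2 h
          exact ⟨k'', hle, List.mem_cons_of_mem _ hm⟩
    | minus =>
      rcases List.mem_cons.1 hk' with h | h
      · -- p = (k, minus)
        have hn : n = k := by injection h.symm with h1 h2
        subst hn
        -- show redIdx (p :: xs) starts with p, since head of redIdx xs has position > ... 
        cases hr : redIdx xs with
        | nil =>
          rw [redIdx_cons_minus_nil _ _ hr] at hk
          simp at hk
        | cons q r' =>
          have hq_mem : q ∈ redIdx xs := by rw [hr]; exact List.mem_cons_self
          have hqn : n < q.1 := hpx q ((redIdx_sublist xs).subset hq_mem)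
          by_cases hq : q.2 = PMSym.plus
          · -- then redIdx (p::xs) = r', and (n+1,minus) ∈ r' but positions in r' exceed q.1 ≥ n+1
            rw [redIdx_cons_minus_plus _ _ _ _ hr hq] at hk
            have hpair : (redIdx xs).Pairwise (fun a b => a.1 < b.1) :=
              List.Pairwise.sublist (redIdx_sublist xs) hxs
            rw [hr, List.pairwise_cons] at hpair
            have := hpair.1 _ hk
            -- q.1 < n+1, but n < q.1
            omega
          · rw [redIdx_cons_minus_other _ _ _ _ hr hq]
            exact ⟨n, le_refl n, List.mem_cons_self⟩
      · -- (k, minus) ∈ xs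
        have hnk : n < k := hpx _ h
        cases hr : redIdx xs with
        | nil =>
          rw [redIdx_cons_minus_nil _ _ hr] at hk
          simp at hk; omega
        | cons q r' =>
          by_cases hq : q.2 = PMSym.plus
          · rw [redIdx_cons_minus_plus _ _ _ _ hr hq] at hk ⊢
            have hk2 : (k + 1, PMSym.minus) ∈ redIdx xs := by
              rw [hr]; exact List.mem_cons_of_mem _ hk
            obtain ⟨k'', hle, hm⟩ := ih hxs hk2 h
            rw [hr] at hm
            rcases List.mem_cons.1 hm with h2 | h2
            · rw [← h2] at hq; simp at hq
            · exact ⟨k'', hle, h2⟩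
          · rw [redIdx_cons_minus_other _ _ _ _ hr hq] at hk ⊢
            rcases List.mem_cons.1 hk with h2 | h2
            · simp at h2; omega
            · rw [← hr] at h2
              obtain ⟨k'', hle, hm⟩ := ih hxs h2 h
              rw [hr] at hm
              exact ⟨k'', hle, List.mem_cons_of_mem _ hm⟩

lemma find?_min_pos (l : List (ℕ × PMSym)) (hl : l.Pairwise (fun a b => a.1 < b.1))
    (p : ℕ × PMSym) (hf : l.find? (fun q => q.2 == PMSym.minus) = some p) :
    ∀ q ∈ l, q.2 = PMSym.minus → p.1 ≤ q.1 := by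
  induction l with
  | nil => simp at hf
  | cons a xs ih =>
    rw [List.find?_cons] at hf
    by_cases ha : a.2 = PMSym.minus
    · simp [ha] at hf
      subst hf
      intro q hq hq2
      rcases List.mem_cons.1 hq with rfl | h
      · exact le_refl _
      · exact le_of_lt ((List.pairwise_cons.1 hl).1 q h)
    · have heq : (a.2 == PMSym.minus) = false := by simpa using ha
      rw [heq] at hf
      intro q hq hq2
      rcases List.mem_cons.1 hq with rfl | h
      · exact absurd hq2 ha
      · exact ih (List.pairwise_cons.1 hl).2 hf q h hq2

lemma getD_anti {α : Type*} [Preorder α] {l : List α} (hs : l.Pairwise (· ≥ ·)) {x y : ℕ}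
    (hxy : x ≤ y) (hy : y < l.length) (d : α) : l.getD y d ≤ l.getD x d := by
  rw [List.getD_eq_getElem _ _ hy, List.getD_eq_getElem _ _ (lt_of_le_of_lt hxy hy)]
  rcases eq_or_lt_of_le hxy with rfl | h
  · exact le_refl _
  · exact List.pairwise_iff_getElem.1 hs x y _ _ h

lemma getD_nat_anti {l : List ℕ} (hs : l.Pairwise (· ≥ ·)) {x y : ℕ} (hxy : x ≤ y) :
    l.getD y 0 ≤ l.getD x 0 := by
  by_cases hy : y < l.length
  · exact getD_anti hs hxy hy 0
  · rw [List.getD_eq_default _ _ (not_lt.1 hy)]; exact Nat.zero_le _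

lemma sorted_of_getD_consec {l : List ℕ} (h : ∀ i, l.getD (i+1) 0 ≤ l.getD i 0) :
    l.Pairwise (· ≥ ·) := by
  rw [List.pairwise_iff_getElem]
  intro a b ha hb hab
  have key : ∀ d, l.getD (a+d) 0 ≤ l.getD a 0 := by
    intro d
    induction d with
    | zero => exact le_refl _
    | succ n ih => exact le_trans (h (a+n)) ih
  have := key (b - a)
  rw [show a + (b-a) = b by omega] at this
  rwa [List.getD_eq_getElem _ _ hb, List.getD_eq_getElem _ _ ha] at this

lemma getD_set' (l : List ℕ) (n v x : ℕ) :
    (l.set n v).getD x 0 = if n = x ∧ x < l.length then v else l.getD x 0 := by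
  by_cases hx : x < l.length
  · rw [List.getD_eq_getElem _ _ (by simpa using hx), List.getD_eq_getElem _ _ hx,
      List.getElem_set]
    simp [hx]
  · rw [List.getD_eq_default _ _ (by simpa using not_lt.1 hx),
      List.getD_eq_default _ _ (not_lt.1 hx)]
    simp [hx]

lemma getD_eraseIdx (l : List ℕ) (n : ℕ) (hn : n < l.length) (x : ℕ) :
    (l.eraseIdx n).getD x 0 = if x < n then l.getD x 0 else l.getD (x+1) 0 := by
  have hlen : (l.eraseIdx n).length = l.length - 1 := by
    simp [List.length_eraseIdx, hn]
  by_cases hx : x < l.length - 1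
  · rw [List.getD_eq_getElem _ _ (by omega), List.getElem_eraseIdx]
    by_cases hxn : x < n
    · rw [dif_pos hxn, if_pos hxn, List.getD_eq_getElem _ _ (by omega)]
    · rw [dif_neg hxn, if_neg hxn, List.getD_eq_getElem _ _ (by omega)]
  · rw [List.getD_eq_default _ _ (by omega)]
    have hxn : ¬ x < n := by omega
    rw [if_neg hxn, List.getD_eq_default _ _ (by omega)]

lemma removeBox_of_ge (μ : List ℕ) (hpos : ∀ x ∈ μ, 0 < x) (m : ℕ)
    (h : μ.length ≤ m) : removeBox μ m = μ := by
  unfold removeBox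
  rw [List.set_eq_of_length_le h, List.filter_eq_self.2]
  intro a ha; simpa using hpos a ha

lemma removeBox_eq_set (μ : List ℕ) (hpos : ∀ x ∈ μ, 0 < x) (m : ℕ)
    (h2 : 2 ≤ μ.getD m 0) : removeBox μ m = μ.set m (μ.getD m 0 - 1) := by
  unfold removeBox
  rw [List.filter_eq_self.2]
  intro a ha
  rcases List.mem_or_eq_of_mem_set ha with h | h
  · simpa using hpos a h
  · rw [h]; simp only [decide_eq_true_eq]; omega

lemma removeBox_eq_eraseIdx (μ : List ℕ) (hpos : ∀ x ∈ μ, 0 < x) (m : ℕ)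
    (hm : m < μ.length) (h1 : μ.getD m 0 = 1) : removeBox μ m = μ.eraseIdx m := by
  unfold removeBox
  rw [h1]
  norm_num
  rw [List.set_eq_take_append_cons_drop, if_pos hm, List.eraseIdx_eq_take_drop_succ,
    List.filter_append]
  have h1 : List.filter (fun x => decide (0 < x)) (List.take m μ) = List.take m μ :=
    List.filter_eq_self.2 (fun a ha => by simpa using hpos a (List.mem_of_mem_take ha))
  have h2 : List.filter (fun x => decide (0 < x)) (0 :: List.drop (m+1) μ)
      = List.drop (m+1) μ := by
    rw [List.filter_cons]
    norm_num
    intro a ha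
    exact hpos a (List.mem_of_mem_drop ha)
  rw [h1, h2]

lemma getD_set_general {α : Type*} (l : List α) (n : ℕ) (v : α) (x : ℕ) (d : α) :
    (l.set n v).getD x d = if n = x ∧ x < l.length then v else l.getD x d := by
  by_cases hx : x < l.length
  · rw [List.getD_eq_getElem _ _ (by simpa using hx), List.getD_eq_getElem _ _ hx,
      List.getElem_set]
    simp [hx]
  · rw [List.getD_eq_default _ _ (by simpa using not_lt.1 hx),
      List.getD_eq_default _ _ (not_lt.1 hx)]
    simp [hx]

lemma removeBox_spec {μ : List ℕ} (hμ : IsPartition μ) {m : ℕ} (hm : m < μ.length) :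
    ∃ x₀, m ≤ x₀ ∧ x₀ < μ.length ∧ μ.getD x₀ 0 = μ.getD m 0 ∧
      (removeBox μ m).getD x₀ 0 + 1 = μ.getD x₀ 0 ∧
      ∀ x, x ≠ x₀ → (removeBox μ m).getD x 0 = μ.getD x 0 := by
  have hapos : 0 < μ.getD m 0 := by
    rw [List.getD_eq_getElem _ _ hm]
    exact hμ.2 _ (List.getElem_mem hm)
  by_cases h2 : 2 ≤ μ.getD m 0
  · refine ⟨m, le_refl m, hm, rfl, ?_, ?_⟩
    · rw [removeBox_eq_set μ hμ.2 m h2, getD_set']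
      rw [if_pos ⟨rfl, hm⟩]
      omega
    · intro x hx
      rw [removeBox_eq_set μ hμ.2 m h2, getD_set', if_neg]
      intro hcon
      exact hx hcon.1.symm
  · have h1 : μ.getD m 0 = 1 := by omega
    have hones : ∀ x, m ≤ x → x < μ.length → μ.getD x 0 = 1 := by
      intro x hx hxl
      have hle := getD_nat_anti hμ.1 hx
      have : 0 < μ.getD x 0 := by
        rw [List.getD_eq_getElem _ _ hxl]
        exact hμ.2 _ (List.getElem_mem hxl)
      omega
    have hre := removeBox_eq_eraseIdx μ hμ.2 m hm h1
    refine ⟨μ.length - 1, by omega, by omega, ?_, ?_, ?_⟩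
    · rw [hones (μ.length - 1) (by omega) (by omega), h1]
    · rw [hre, getD_eraseIdx μ m hm, if_neg (by omega),
        List.getD_eq_default _ _ (by omega), hones (μ.length - 1) (by omega) (by omega)]
    · intro x hx
      rw [hre, getD_eraseIdx μ m hm]
      by_cases hxm : x < m
      · rw [if_pos hxm]
      · rw [if_neg hxm]
        by_cases hxl : x < μ.length - 1
        · rw [hones (x+1) (by omega) (by omega), hones x (by omega) (by omega)]
        · rw [List.getD_eq_default _ _ (by omega), List.getD_eq_default _ _ (by omega)]

lemma remov_next_le {μ : List ℕ} (hμ : IsPartition μ) {m : ℕ} (hm : m < μ.length)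
    (h2 : 2 ≤ μ.getD m 0) (hrp : IsPartition (removeBox μ m)) :
    μ.getD (m+1) 0 ≤ μ.getD m 0 - 1 := by
  rw [removeBox_eq_set μ hμ.2 m h2] at hrp
  by_cases hm1 : m + 1 < μ.length
  · have := getD_anti hrp.1 (by omega : m ≤ m + 1) (by simpa using hm1) 0
    rw [getD_set', getD_set', if_neg (by omega), if_pos ⟨rfl, hm⟩] at this
    exact this
  · rw [List.getD_eq_default _ _ (by omega)]
    omega

lemma removable_mirror {μt : List ℕ} (hμt : IsPartition μt) (p a : ℕ)
    (hb : μt.getD p 0 = a) (ha : 0 < a)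
    (hnext : 2 ≤ a → μt.getD (p+1) 0 ≤ a - 1) :
    IsPartition (removeBox μt p) ∧ p < μt.length := by
  have hp : p < μt.length := by
    by_contra hcon
    rw [List.getD_eq_default _ _ (by omega)] at hb
    omega
  refine ⟨?_, hp⟩
  by_cases h2 : 2 ≤ a
  · rw [removeBox_eq_set μt hμt.2 p (by omega)]
    constructor
    · apply sorted_of_getD_consec
      intro i
      rw [getD_set', getD_set']
      by_cases h1 : p = i + 1 ∧ i + 1 < μt.length
      · rw [if_pos h1, if_neg (by omega)]
        have hmono := getD_nat_anti hμt.1 (by omega : i ≤ i + 1)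
        have h3 : μt.getD (i+1) 0 = a := by rw [← h1.1]; exact hb
        omega
      · rw [if_neg h1]
        by_cases h0 : p = i ∧ i < μt.length
        · rw [if_pos h0]
          have := hnext h2
          rw [h0.1] at this
          omega
        · rw [if_neg h0]
          exact getD_nat_anti hμt.1 (by omega : i ≤ i + 1)
    · intro x hx
      rcases List.mem_or_eq_of_mem_set hx with h | h
      · exact hμt.2 x h
      · omega
  · rw [removeBox_eq_eraseIdx μt hμt.2 p hp (by omega)]
    exact ⟨List.Pairwise.sublist (List.eraseIdx_sublist _ _) hμt.1,
      fun x hx => hμt.2 x ((List.eraseIdx_sublist _ _).subset hx)⟩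

lemma symOf_eq_minus {μ : List ℕ} {i j : ℤ} {m : ℕ} (h : RemovableJBox μ i j m) :
    symOf j (μ, i) = PMSym.minus := by
  unfold symOf
  rw [if_pos]
  rw [List.any_eq_true]
  exact ⟨m, List.mem_range.2 h.1, by simpa using h⟩

/-- If `(μ^{(1)}, …, μ^{(r)})` is a Kleshchev multipartition colored by
`λ = Λ_{i₁} + ⋯ + Λ_{i_r}` with `i₁ ≥ ⋯ ≥ i_r`, and `E_j` of this colored multipartition
is nonzero, then the result is again a Kleshchev multipartition. -/
theorem stmt13 (j : ℤ) (is : List ℤ) (μs μs' : List (List ℕ))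
    (hlen : μs.length = is.length) (hdec : is.Pairwise (· ≥ ·))
    (hpart : ∀ μ ∈ μs, IsPartition μ) (hK : Kleshchev is μs)
    (h : EjMP j is μs = some μs') :
    (∀ μ ∈ μs', IsPartition μ) ∧ Kleshchev is μs' := by
  classical
  unfold EjMP at h
  cases hf : (redIdx (((μs.zip is).map (symOf j)).zipIdx.map Prod.swap)).find? (fun p => p.2 == PMSym.minus) with
  | none => rw [hf] at h; simp at h
  | some p =>
    rw [hf] at h
    obtain ⟨k, s⟩ := p
    have hp2 : s = PMSym.minus := by simpa using List.find?_some hf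
    subst hp2
    unfold EjPart at h
    dsimp only at h
    cases hg : (List.range (μs.getD k []).length).find?
        (fun m => decide (RemovableJBox (μs.getD k []) (is.getD k 0) j m)) with
    | none => rw [hg] at h; simp at h
    | some m =>
      rw [hg] at h
      simp only [Option.some.injEq] at h
      subst h
      set w := ((μs.zip is).map (symOf j)) with hw
      have hRm : RemovableJBox (μs.getD k []) (is.getD k 0) j m := by
        have := List.find?_some hg
        simpa using this
      have hwpair : (w.zipIdx.map Prod.swap).Pairwise (fun a b => a.1 < b.1) := by
        have := List.pairwise_lt_range' (s := 0) (n := w.length)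
        rw [← List.zipIdx_map_snd 0 w, List.pairwise_map] at this
        rw [List.pairwise_map]
        exact this
      have hredpair : (redIdx (w.zipIdx.map Prod.swap)).Pairwise (fun a b => a.1 < b.1) :=
        List.Pairwise.sublist (redIdx_sublist _) hwpair
      have hpmem : (k, PMSym.minus) ∈ redIdx (w.zipIdx.map Prod.swap) := List.mem_of_find?_eq_some hf
      have hpmem' : (k, PMSym.minus) ∈ (w.zipIdx.map Prod.swap) := (redIdx_sublist _).subset hpmem
      have hkw : w[k]? = some PMSym.minus := List.mem_zipIdx_iff_getElem?.1 ((List.mem_map_swap _ _ _).1 hpmem')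
      have hkwlen : k < w.length := by
        by_contra hc
        rw [List.getElem?_eq_none (by omega)] at hkw
        simp at hkw
      have hwlen : w.length = μs.length := by
        rw [hw, List.length_map, List.length_zip, hlen, min_self]
      have hk : k < μs.length := hwlen ▸ hkwlen
      have hμmem : μs.getD k [] ∈ μs := by
        rw [List.getD_eq_getElem _ _ hk]
        exact List.getElem_mem hk
      have hμP : IsPartition (μs.getD k []) := hpart _ hμmem
      obtain ⟨x₀, hx0m, hx0len, hx0a, hx0drop, hx0eq⟩ := removeBox_spec hμP hRm.1
      have hle : ∀ y, (removeBox (μs.getD k []) m).getD y 0 ≤ (μs.getD k []).getD y 0 := by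
        intro y
        by_cases hy : y = x₀
        · subst hy; omega
        · rw [hx0eq y hy]
      constructor
      · intro μ hmem
        rcases List.mem_or_eq_of_mem_set hmem with hmm | hmm
        · exact hpart μ hmm
        · rw [hmm]; exact hRm.2.2
      · intro t ht x
        rw [List.length_set] at ht
        rw [getD_set_general, getD_set_general]
        by_cases hpt : k = t
        · rw [if_pos ⟨hpt, by omega⟩, if_neg (by omega)]
          subst hpt
          exact le_trans (hle _) (hK k ht x)
        · by_cases hpt1 : k = t + 1
          · rw [if_neg (by omega), if_pos ⟨hpt1, by omega⟩]
            subst hpt1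
            by_contra hcon
            push_neg at hcon
            have h1 := hK t ht x
            have hxx0 : x = x₀ := by
              by_contra hne
              rw [hx0eq x hne] at hcon
              omega
            subst hxx0
            set ct := (is.getD t 0 - is.getD (t+1) 0).toNat with hct
            set μt := μs.getD t [] with hμt
            have htt : t < μs.length := by omega
            have hμtP : IsPartition μt := hpart _ (by
              rw [hμt, List.getD_eq_getElem _ _ htt]
              exact List.getElem_mem htt)
            have hapos : 0 < (μs.getD (t+1) []).getD m 0 := by omega
            have hveq : μt.getD (ct + x) 0 = (μs.getD (t+1) []).getD m 0 := by omega
            have hb : μt.getD (ct + m) 0 = (μs.getD (t+1) []).getD m 0 := by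
              have hge := getD_nat_anti hμtP.1 (show ct + m ≤ ct + x by omega)
              have hle2 := hK t ht m
              rw [← hct, ← hμt] at hle2
              omega
            have hirange : t + 1 < is.length := by omega
            have hile : is.getD (t+1) 0 ≤ is.getD t 0 :=
              getD_anti hdec (by omega : t ≤ t + 1) hirange 0
            have hctz : (ct : ℤ) = is.getD t 0 - is.getD (t+1) 0 := by
              exact Int.toNat_of_nonneg (by omega)
            have hnext : 2 ≤ (μs.getD (t+1) []).getD m 0 →
                μt.getD (ct + m + 1) 0 ≤ (μs.getD (t+1) []).getD m 0 - 1 := by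
              intro h2
              have hnn := remov_next_le hμP hRm.1 h2 hRm.2.2
              have := hK t ht (m+1)
              rw [← hct, ← hμt, show ct + (m+1) = ct + m + 1 by omega] at this
              omega
            obtain ⟨hPt, hptlen⟩ := removable_mirror hμtP (ct + m) _ hb hapos hnext
            have hRemt : RemovableJBox μt (is.getD t 0) j (ct + m) := by
              refine ⟨hptlen, ?_, hPt⟩
              have hcontent := hRm.2.1
              push_cast
              push_cast at hcontent
              omega
            have hsym : symOf j (μt, is.getD t 0) = PMSym.minus := symOf_eq_minus hRemt
            have htw : t < w.length := by omega
            have hwt : w[t] = PMSym.minus := by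
              show (List.map (symOf j) (μs.zip is))[t]'(by
                simpa [hw] using htw) = PMSym.minus
              rw [List.getElem_map, List.getElem_zip]
              have h1 : μs[t] = μt := by rw [hμt, List.getD_eq_getElem _ _ htt]
              have h2 : is[t] = is.getD t 0 := by
                rw [List.getD_eq_getElem _ _ (by omega : t < is.length)]
              rw [h1, h2]
              exact hsym
            have hmemt : (t, PMSym.minus) ∈ (w.zipIdx.map Prod.swap) := by
              rw [List.mem_map_swap, List.mem_zipIdx_iff_getElem?]
              rw [List.getElem?_eq_getElem htw, hwt]
            obtain ⟨k'', hk''le, hk''mem⟩ := lemC (w.zipIdx.map Prod.swap) hwpair t hpmem hmemt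
            have := find?_min_pos _ hredpair _ hf _ hk''mem rfl
            simp at this
            omega
          · rw [if_neg (by omega), if_neg (by omega)]
            exact hK t ht x
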